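/- (Proposition 2, survival asymptote) Suppose 0 < Ḡ(t) < 1 for all sufficiently large t, and Ḡ(t) → 0 as t → ∞. Then 1 − F^BGMO(t) ∼ (α Ḡ(t))^{θn}/(n B(m,n)) as t → ∞; precisely, the ratio n B(m,n) (1 − F^BGMO(t)) / (α Ḡ(t))^{θn} tends to 1 as t → ∞. -/

import Mathlib

/-- The GMO survival function `F̄^GMO(t) = (α Ḡ(t)/(1 − ᾱ Ḡ(t)))^θ`. -/
noncomputable def FbarGMO (G : ℝ → ℝ) (α θ t : ℝ) : ℝ :=
  (α * (1 - G t) / (1 - (1 - α) * (1 - G t))) ^ θ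

/-- The beta function `B(m,n) = ∫₀¹ v^{m−1}(1−v)^{n−1} dv`. -/
noncomputable def betaFn (m n : ℝ) : ℝ :=
  ∫ v in (0:ℝ)..1, v ^ (m - 1) * (1 - v) ^ (n - 1)

/-- The regularized incomplete beta function ratio
`I_x(m,n) = B(m,n)⁻¹ ∫₀ˣ v^{m−1}(1−v)^{n−1} dv`. -/
noncomputable def incBetaRatio (m n x : ℝ) : ℝ :=
  (betaFn m n)⁻¹ * ∫ v in (0:ℝ)..x, v ^ (m - 1) * (1 - v) ^ (n - 1)

/-- The BGMO-G cdf `F^BGMO(t) = I_{1 − F̄^GMO(t)}(m,n)`. -/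
noncomputable def FBGMO (G : ℝ → ℝ) (α θ m n t : ℝ) : ℝ :=
  incBetaRatio m n (1 - FbarGMO G α θ t)

open Filter MeasureTheory intervalIntegral

lemma aux_integrable {m n : ℝ} (hm : 0 < m) (hn : 0 < n) :
    IntervalIntegrable (fun v : ℝ => v ^ (m - 1) * (1 - v) ^ (n - 1)) volume 0 1 := by
  have h1 : IntervalIntegrable (fun v : ℝ => v ^ (m - 1) * (1 - v) ^ (n - 1))
      volume 0 (1/2) := by
    apply IntervalIntegrable.mul_continuousOn
    · exact intervalIntegral.intervalIntegrable_rpow' (by linarith)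
    · apply ContinuousOn.rpow_const (by fun_prop)
      intro x hx
      rw [Set.uIcc_of_le (by norm_num)] at hx
      left; have := hx.2; intro h; nlinarith [hx.2]
  have h2 : IntervalIntegrable (fun v : ℝ => v ^ (m - 1) * (1 - v) ^ (n - 1))
      volume (1/2) 1 := by
    apply IntervalIntegrable.continuousOn_mul
    · have h := (intervalIntegral.intervalIntegrable_rpow'
        (r := n - 1) (a := 0) (b := 1/2) (by linarith)).comp_sub_left 1
      norm_num at h
      exact h.symm
    · apply ContinuousOn.rpow_const (by fun_prop)
      intro x hx
      rw [Set.uIcc_of_le (by norm_num)] at hx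
      left; intro h; nlinarith [hx.1]
  exact h1.trans h2

lemma betaFn_pos {m n : ℝ} (hm : 0 < m) (hn : 0 < n) : 0 < betaFn m n := by
  apply intervalIntegral.intervalIntegral_pos_of_pos_on (aux_integrable hm hn)
  · intro x hx
    exact mul_pos (Real.rpow_pos_of_pos hx.1 _) (Real.rpow_pos_of_pos (by linarith [hx.2]) _)
  · norm_num

lemma aux_tail_const {n : ℝ} (hn : 0 < n) (c x : ℝ) :
    (∫ v in (1 - x : ℝ)..1, c * (1 - v) ^ (n - 1)) = c * (x ^ n / n) := by
  rw [intervalIntegral.integral_const_mul]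
  congr 1
  have h := intervalIntegral.integral_comp_sub_left (a := 1 - x) (b := 1)
    (fun w : ℝ => w ^ (n - 1)) 1
  simp only [sub_self, sub_sub_cancel] at h
  rw [h, integral_rpow (Or.inl (by linarith))]
  rw [Real.zero_rpow (by intro h'; linarith : n - 1 + 1 ≠ 0)]
  ring_nf

lemma aux_tail_integrable {n : ℝ} (hn : 0 < n) (c x : ℝ) :
    IntervalIntegrable (fun v : ℝ => c * (1 - v) ^ (n - 1)) volume (1 - x) 1 := by
  apply IntervalIntegrable.const_mul
  have h := (intervalIntegral.intervalIntegrable_rpow'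
      (r := n - 1) (a := 0) (b := x) (by linarith)).comp_sub_left 1
  simpa using h.symm

lemma aux_bound {m n : ℝ} (x : ℝ) (hm : 0 < m) (hn : 0 < n) (hx0 : 0 < x) (hx1 : x < 1) :
    min 1 ((1 - x) ^ (m - 1)) * (x ^ n / n)
      ≤ (∫ v in (1 - x : ℝ)..1, v ^ (m - 1) * (1 - v) ^ (n - 1)) ∧
    (∫ v in (1 - x : ℝ)..1, v ^ (m - 1) * (1 - v) ^ (n - 1))
      ≤ max 1 ((1 - x) ^ (m - 1)) * (x ^ n / n) := by
  have hI : IntervalIntegrable (fun v : ℝ => v ^ (m - 1) * (1 - v) ^ (n - 1))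
      volume (1 - x) 1 := by
    apply (aux_integrable hm hn).mono_set
    rw [Set.uIcc_of_le (by linarith), Set.uIcc_of_le (by norm_num)]
    exact Set.Icc_subset_Icc (by linarith) le_rfl
  have hptlo : ∀ v ∈ Set.Icc (1 - x) 1,
      min 1 ((1 - x) ^ (m - 1)) * (1 - v) ^ (n - 1) ≤ v ^ (m - 1) * (1 - v) ^ (n - 1) := by
    intro v hv
    have hv0 : 0 < v := by linarith [hv.1]
    have hnn : (0:ℝ) ≤ (1 - v) ^ (n - 1) := Real.rpow_nonneg (by linarith [hv.2]) _
    apply mul_le_mul_of_nonneg_right _ hnn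
    rcases le_or_gt 0 (m - 1) with h | h
    · exact (min_le_right _ _).trans (Real.rpow_le_rpow (by linarith) hv.1 h)
    · refine (min_le_left _ _).trans ?_
      have := Real.rpow_le_rpow_of_nonpos hv0 hv.2 h.le
      simpa using this
  have hpthi : ∀ v ∈ Set.Icc (1 - x) 1,
      v ^ (m - 1) * (1 - v) ^ (n - 1) ≤ max 1 ((1 - x) ^ (m - 1)) * (1 - v) ^ (n - 1) := by
    intro v hv
    have hv0 : 0 < v := by linarith [hv.1]
    have hnn : (0:ℝ) ≤ (1 - v) ^ (n - 1) := Real.rpow_nonneg (by linarith [hv.2]) _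
    apply mul_le_mul_of_nonneg_right _ hnn
    rcases le_or_gt 0 (m - 1) with h | h
    · refine le_trans ?_ (le_max_left _ _)
      have := Real.rpow_le_rpow hv0.le hv.2 h
      simpa using this
    · exact le_trans (Real.rpow_le_rpow_of_nonpos (by linarith) hv.1 h.le) (le_max_right _ _)
  constructor
  · rw [← aux_tail_const hn _ x]
    exact intervalIntegral.integral_mono_on (by linarith)
      (aux_tail_integrable hn _ x) hI hptlo
  · rw [← aux_tail_const hn _ x]
    exact intervalIntegral.integral_mono_on (by linarith) hI
      (aux_tail_integrable hn _ x) hpthi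

lemma aux_ratio_bounds {m n : ℝ} (x c : ℝ) (hm : 0 < m) (hn : 0 < n)
    (hx0 : 0 < x) (hx1 : x < 1) (hc : 0 < c) :
    min 1 ((1 - x) ^ (m - 1)) * (x ^ n / c)
      ≤ n * betaFn m n * (1 - incBetaRatio m n (1 - x)) / c ∧
    n * betaFn m n * (1 - incBetaRatio m n (1 - x)) / c
      ≤ max 1 ((1 - x) ^ (m - 1)) * (x ^ n / c) := by
  have hB : 0 < betaFn m n := betaFn_pos hm hn
  have hI1 : IntervalIntegrable (fun v : ℝ => v ^ (m - 1) * (1 - v) ^ (n - 1))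
      volume 0 (1 - x) := by
    apply (aux_integrable hm hn).mono_set
    rw [Set.uIcc_of_le (by linarith), Set.uIcc_of_le (by norm_num)]
    exact Set.Icc_subset_Icc le_rfl (by linarith)
  have hI2 : IntervalIntegrable (fun v : ℝ => v ^ (m - 1) * (1 - v) ^ (n - 1))
      volume (1 - x) 1 := by
    apply (aux_integrable hm hn).mono_set
    rw [Set.uIcc_of_le (by linarith), Set.uIcc_of_le (by norm_num)]
    exact Set.Icc_subset_Icc (by linarith) le_rfl
  have hadd : (∫ v in (0:ℝ)..(1 - x), v ^ (m - 1) * (1 - v) ^ (n - 1))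
      + (∫ v in (1 - x : ℝ)..1, v ^ (m - 1) * (1 - v) ^ (n - 1)) = betaFn m n :=
    intervalIntegral.integral_add_adjacent_intervals hI1 hI2
  have heq : n * betaFn m n * (1 - incBetaRatio m n (1 - x))
      = n * ∫ v in (1 - x : ℝ)..1, v ^ (m - 1) * (1 - v) ^ (n - 1) := by
    unfold incBetaRatio
    have heq2 : betaFn m n * (1 - (betaFn m n)⁻¹
        * (∫ v in (0:ℝ)..(1 - x), v ^ (m - 1) * (1 - v) ^ (n - 1)))
        = ∫ v in (1 - x : ℝ)..1, v ^ (m - 1) * (1 - v) ^ (n - 1) := by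
      rw [mul_sub, mul_one, ← mul_assoc, mul_inv_cancel₀ hB.ne', one_mul]
      linarith [hadd]
    rw [mul_assoc, heq2]
  obtain ⟨hlo, hhi⟩ := aux_bound x hm hn hx0 hx1
  constructor
  · have h1 : min 1 ((1 - x) ^ (m - 1)) * (x ^ n / c)
        = n * (min 1 ((1 - x) ^ (m - 1)) * (x ^ n / n)) / c := by
      field_simp
    rw [h1, heq]
    gcongr
  · have h1 : max 1 ((1 - x) ^ (m - 1)) * (x ^ n / c)
        = n * (max 1 ((1 - x) ^ (m - 1)) * (x ^ n / n)) / c := by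
      field_simp
    rw [h1, heq]
    gcongr

/-- Proposition 2, survival asymptote: suppose `0 < Ḡ(t) < 1` for all
sufficiently large `t`, and `Ḡ(t) → 0` as `t → ∞`. Then
`1 − F^BGMO(t) ∼ (α Ḡ(t))^{θn}/(n B(m,n))` as `t → ∞`; precisely, the ratio
`n B(m,n) (1 − F^BGMO(t)) / (α Ḡ(t))^{θn}` tends to `1` as `t → ∞`. -/
theorem bgmo_survival_asymptote (G : ℝ → ℝ) (α θ m n : ℝ)
    (hα : 0 < α) (hθ : 0 < θ) (hm : 0 < m) (hn : 0 < n)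
    (hev : ∀ᶠ t in atTop, 0 < 1 - G t ∧ 1 - G t < 1)
    (hlim : Tendsto (fun t : ℝ => 1 - G t) atTop (nhds 0)) :
    Tendsto (fun t : ℝ =>
        n * betaFn m n * (1 - FBGMO G α θ m n t) / (α * (1 - G t)) ^ (θ * n))
      atTop (nhds 1) := by
  -- limits of auxiliary functions
  have hDlim : Tendsto (fun t : ℝ => 1 - (1 - α) * (1 - G t)) atTop (nhds 1) := by
    have := tendsto_const_nhds (x := (1:ℝ)) (f := atTop (α := ℝ)) |>.sub
      ((tendsto_const_nhds (x := (1 - α))).mul hlim)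
    simpa using this
  have hulim : Tendsto (fun t : ℝ => α * (1 - G t) / (1 - (1 - α) * (1 - G t)))
      atTop (nhds 0) := by
    have h1 : Tendsto (fun t : ℝ => α * (1 - G t)) atTop (nhds 0) := by
      have := (tendsto_const_nhds (x := α)).mul hlim
      simpa using this
    have := h1.div hDlim one_ne_zero
    rw [zero_div] at this
    exact this
  have hfblim : Tendsto (fun t : ℝ => FbarGMO G α θ t) atTop (nhds 0) := by
    have := hulim.rpow_const (p := θ) (Or.inr hθ.le)
    simpa [FbarGMO, Real.zero_rpow hθ.ne'] using this
  have hqlim : Tendsto (fun t : ℝ => (1 / (1 - (1 - α) * (1 - G t))) ^ (θ * n))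
      atTop (nhds 1) := by
    have h1 : Tendsto (fun t : ℝ => 1 / (1 - (1 - α) * (1 - G t))) atTop (nhds 1) := by
      have h := hDlim.inv₀ one_ne_zero
      simpa [one_div] using h
    have := h1.rpow_const (p := θ * n) (Or.inl one_ne_zero)
    simpa using this
  have hmlim : Tendsto (fun t : ℝ => (1 - FbarGMO G α θ t) ^ (m - 1)) atTop (nhds 1) := by
    have h1 : Tendsto (fun t : ℝ => 1 - FbarGMO G α θ t) atTop (nhds 1) := by
      have := (tendsto_const_nhds (x := (1:ℝ))).sub hfblim
      simpa using this
    have := h1.rpow_const (p := m - 1) (Or.inl one_ne_zero)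
    simpa using this
  have hLb : Tendsto (fun t : ℝ => min 1 ((1 - FbarGMO G α θ t) ^ (m - 1))
      * (1 / (1 - (1 - α) * (1 - G t))) ^ (θ * n)) atTop (nhds 1) := by
    have := (tendsto_const_nhds (x := (1:ℝ)) (f := atTop (α := ℝ)) |>.min hmlim).mul hqlim
    simpa using this
  have hUb : Tendsto (fun t : ℝ => max 1 ((1 - FbarGMO G α θ t) ^ (m - 1))
      * (1 / (1 - (1 - α) * (1 - G t))) ^ (θ * n)) atTop (nhds 1) := by
    have := (tendsto_const_nhds (x := (1:ℝ)) (f := atTop (α := ℝ)) |>.max hmlim).mul hqlim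
    simpa using this
  -- eventual bounds
  have hDev : ∀ᶠ t in atTop, (1/2 : ℝ) < 1 - (1 - α) * (1 - G t) :=
    hDlim.eventually_const_lt (by norm_num)
  have huev : ∀ᶠ t in atTop, α * (1 - G t) / (1 - (1 - α) * (1 - G t)) < 1 :=
    hulim.eventually_lt_const one_pos
  have key : ∀ᶠ t in atTop,
      (min 1 ((1 - FbarGMO G α θ t) ^ (m - 1))
        * (1 / (1 - (1 - α) * (1 - G t))) ^ (θ * n)
        ≤ n * betaFn m n * (1 - FBGMO G α θ m n t) / (α * (1 - G t)) ^ (θ * n)) ∧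
      (n * betaFn m n * (1 - FBGMO G α θ m n t) / (α * (1 - G t)) ^ (θ * n)
        ≤ max 1 ((1 - FbarGMO G α θ t) ^ (m - 1))
          * (1 / (1 - (1 - α) * (1 - G t))) ^ (θ * n)) := by
    filter_upwards [hev, hDev, huev] with t hg hD2 hu1
    obtain ⟨hg0, hg1⟩ := hg
    have hD0 : (0:ℝ) < 1 - (1 - α) * (1 - G t) := by linarith
    have hu0 : 0 < α * (1 - G t) / (1 - (1 - α) * (1 - G t)) :=
      div_pos (mul_pos hα hg0) hD0
    have hx0 : 0 < FbarGMO G α θ t := Real.rpow_pos_of_pos hu0 θ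
    have hx1 : FbarGMO G α θ t < 1 := Real.rpow_lt_one hu0.le hu1 hθ
    have hc : 0 < (α * (1 - G t)) ^ (θ * n) :=
      Real.rpow_pos_of_pos (mul_pos hα hg0) _
    have hxc : (FbarGMO G α θ t) ^ n / (α * (1 - G t)) ^ (θ * n)
        = (1 / (1 - (1 - α) * (1 - G t))) ^ (θ * n) := by
      have h1 : (FbarGMO G α θ t) ^ n
          = (α * (1 - G t) / (1 - (1 - α) * (1 - G t))) ^ (θ * n) := by
        rw [FbarGMO, ← Real.rpow_mul hu0.le]
      rw [h1, ← Real.div_rpow hu0.le (mul_pos hα hg0).le]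
      congr 1
      field_simp
    obtain ⟨hlo, hhi⟩ := aux_ratio_bounds (FbarGMO G α θ t)
      ((α * (1 - G t)) ^ (θ * n)) hm hn hx0 hx1 hc
    rw [hxc] at hlo hhi
    exact ⟨hlo, hhi⟩
  exact tendsto_of_tendsto_of_tendsto_of_le_of_le' hLb hUb
    (key.mono fun t h => h.1) (key.mono fun t h => h.2)
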